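/- Let S and A be finite nonempty sets, R : S×A → [0,1], and g : A → G a surjection onto a finite set G with A_h = g^{-1}(h). Consider all tuples (b_R, R₁, R₂) where b_R : S×A → [0,1], R₁ : S×G → [0,1], R₂ : S×A → [0,1], and R(s,a) = (1−b_R(s,a))·R₁(s,g(a)) + b_R(s,a)·R₂(s,a) for all (s,a). The minimum of max_{(s,a)∈S×A} b_R(s,a) over all such tuples exists and equals max_{s∈S, h∈G} (max_{a∈A_h} R(s,a) − min_{a∈A_h} R(s,a)). -/
import Mathlib


open scoped BigOperators Classical

namespace MDPGroup

variable {S A G : Type*}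

/-- `P` is a transition kernel: `P s a ·` is a probability distribution on states. -/
structure IsKernel [Fintype S] (P : S → A → S → ℝ) : Prop where
  nonneg : ∀ s a s', 0 ≤ P s a s'
  sum_one : ∀ s a, ∑ s', P s a s' = 1

/-- `π` is a stationary randomized policy. -/
structure IsPolicy [Fintype A] (π : S → A → ℝ) : Prop where
  nonneg : ∀ s a, 0 ≤ π s a
  sum_one : ∀ s, ∑ a, π s a = 1

/-- `Q` satisfies the Bellman equation for policy `π`. -/
def IsBellman [Fintype S] [Fintype A] (P : S → A → S → ℝ) (R : S → A → ℝ) (γ : ℝ)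
    (π : S → A → ℝ) (Q : S → A → ℝ) : Prop :=
  ∀ s a, Q s a = R s a + γ * ∑ s', P s a s' * ∑ a', π s' a' * Q s' a'

/-- The action-value function of policy `π` (the unique solution of the Bellman equation,
when it exists). -/
noncomputable def Qpi [Fintype S] [Fintype A] (P : S → A → S → ℝ) (R : S → A → ℝ)
    (γ : ℝ) (π : S → A → ℝ) : S → A → ℝ :=
  if h : ∃ Q : S → A → ℝ, IsBellman P R γ π Q then h.choose else 0

/-- The state-value function of policy `π`. -/
noncomputable def Vpi [Fintype S] [Fintype A] (P : S → A → S → ℝ) (R : S → A → ℝ)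
    (γ : ℝ) (π : S → A → ℝ) : S → ℝ :=
  fun s => ∑ a, π s a * Qpi P R γ π s a

/-- The optimal state-value function. -/
noncomputable def Vstar [Fintype S] [Fintype A] (P : S → A → S → ℝ) (R : S → A → ℝ)
    (γ : ℝ) : S → ℝ :=
  fun s => ⨆ π : {π : S → A → ℝ // IsPolicy π}, Vpi P R γ π.1 s

/-- The optimal action-value function. -/
noncomputable def Qstar [Fintype S] [Fintype A] (P : S → A → S → ℝ) (R : S → A → ℝ)
    (γ : ℝ) : S → A → ℝ :=
  fun s a => ⨆ π : {π : S → A → ℝ // IsPolicy π}, Qpi P R γ π.1 s a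

/-- Supremum norm of a function on a (finite) index type. -/
noncomputable def supNorm {ι : Type*} (f : ι → ℝ) : ℝ := ⨆ i, |f i|

/-- A lower-level policy, selecting an action within each group. -/
structure IsLower [Fintype A] (g : A → G) (πi : G → A → ℝ) : Prop where
  nonneg : ∀ h a, 0 ≤ πi h a
  sum_one : ∀ h, ∑ a, πi h a = 1
  support : ∀ h a, g a ≠ h → πi h a = 0

/-- The composed policy `π^o ∘ π^i`. -/
def compose (g : A → G) (πi : G → A → ℝ) (πo : S → G → ℝ) : S → A → ℝ :=
  fun s a => πo s (g a) * πi (g a) a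

/-- Grouped transition kernel. -/
noncomputable def PG [Fintype A] (P : S → A → S → ℝ) (πi : G → A → ℝ) : S → G → S → ℝ :=
  fun s h s' => ∑ a, πi h a * P s a s'

/-- Grouped reward. -/
noncomputable def RG [Fintype A] (R : S → A → ℝ) (πi : G → A → ℝ) : S → G → ℝ :=
  fun s h => ∑ a, πi h a * R s a

/-- The optimal transition deviation factor `β_P^*(g)`. -/
noncomputable def betaPstar [Fintype S] (P : S → A → S → ℝ) (g : A → G) : ℝ :=
  ⨆ p : S × G, (1 - ∑ s', ⨅ a : {a : A // g a = p.2}, P p.1 a.1 s')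

/-- The optimal reward deviation factor `β_R^*(g)`. -/
noncomputable def betaRstar (R : S → A → ℝ) (g : A → G) : ℝ :=
  ⨆ q : {q : S × A × A // g q.2.1 = g q.2.2}, (R q.1.1 q.1.2.1 - R q.1.1 q.1.2.2)




private lemma bdda {ι : Type*} [Finite ι] (f : ι → ℝ) : BddAbove (Set.range f) :=
  (Set.finite_range f).bddAbove

private lemma bddb {ι : Type*} [Finite ι] (f : ι → ℝ) : BddBelow (Set.range f) :=
  (Set.finite_range f).bddBelow

theorem statement_13 {S A G : Type*} [Fintype S] [Fintype A] [Fintype G]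
    [Nonempty S] [Nonempty A]
    (R : S → A → ℝ) (hR : ∀ s a, 0 ≤ R s a ∧ R s a ≤ 1)
    (g : A → G) (hg : Function.Surjective g) :
    IsLeast {m : ℝ | ∃ (bR : S → A → ℝ) (R1 : S → G → ℝ) (R2 : S → A → ℝ),
        (∀ s a, 0 ≤ bR s a ∧ bR s a ≤ 1) ∧
        (∀ s h, 0 ≤ R1 s h ∧ R1 s h ≤ 1) ∧
        (∀ s a, 0 ≤ R2 s a ∧ R2 s a ≤ 1) ∧
        (∀ s a, R s a = (1 - bR s a) * R1 s (g a) + bR s a * R2 s a) ∧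
        m = ⨆ p : S × A, bR p.1 p.2}
      (⨆ p : S × G, ((⨆ a : {a : A // g a = p.2}, R p.1 a.1)
          - ⨅ a : {a : A // g a = p.2}, R p.1 a.1)) := by
  classical
  haveI hGne : Nonempty G := Nonempty.map g inferInstance
  haveI hsub : ∀ h : G, Nonempty {a : A // g a = h} := fun h => by
    obtain ⟨a, ha⟩ := hg h
    exact ⟨⟨a, ha⟩⟩
  set Mx : S → G → ℝ := fun s h => ⨆ a : {a : A // g a = h}, R s a.1 with hMxdef
  set mn : S → G → ℝ := fun s h => ⨅ a : {a : A // g a = h}, R s a.1 with hmndef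
  have hmle : ∀ s (a : A), mn s (g a) ≤ R s a := fun s a =>
    ciInf_le (bddb fun a' : {a' : A // g a' = g a} => R s a'.1) ⟨a, rfl⟩
  have hMge : ∀ s (a : A), R s a ≤ Mx s (g a) := fun s a =>
    le_ciSup (bdda fun a' : {a' : A // g a' = g a} => R s a'.1) ⟨a, rfl⟩
  have hm0 : ∀ s h, 0 ≤ mn s h := fun s h => le_ciInf fun a => (hR s a.1).1
  have hM1 : ∀ s h, Mx s h ≤ 1 := fun s h => ciSup_le fun a => (hR s a.1).2
  have hmM : ∀ s h, mn s h ≤ Mx s h := fun s h => by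
    obtain ⟨a⟩ := hsub h
    calc mn s h ≤ R s a.1 := ciInf_le (bddb fun a' : {a' : A // g a' = h} => R s a'.1) a
    _ ≤ Mx s h := le_ciSup (bdda fun a' : {a' : A // g a' = h} => R s a'.1) a
  show IsLeast _ (⨆ p : S × G, (Mx p.1 p.2 - mn p.1 p.2))
  -- the candidate witnesses
  set bRw : S → A → ℝ := fun s a => Mx s (g a) - mn s (g a) with hbRw
  set R1w : S → G → ℝ := fun s h => mn s h / (1 - (Mx s h - mn s h)) with hR1w
  set R2w : S → A → ℝ := fun s a => (R s a - mn s (g a)) / (Mx s (g a) - mn s (g a)) with hR2w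
  have hbRw01 : ∀ s a, 0 ≤ bRw s a ∧ bRw s a ≤ 1 := fun s a =>
    ⟨sub_nonneg.2 (hmM s (g a)), by
      have := hm0 s (g a); have := hM1 s (g a); simp only [hbRw]; linarith⟩
  have hR1w01 : ∀ s h, 0 ≤ R1w s h ∧ R1w s h ≤ 1 := by
    intro s h
    have h0 := hm0 s h
    have h1 := hM1 s h
    have hmm := hmM s h
    constructor
    · exact div_nonneg h0 (by linarith)
    · rcases eq_or_lt_of_le (show (0:ℝ) ≤ 1 - (Mx s h - mn s h) by linarith) with he | hlt
      · simp only [hR1w, ← he, div_zero]; norm_num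
      · exact (div_le_one hlt).2 (by linarith)
  have hR2w01 : ∀ s a, 0 ≤ R2w s a ∧ R2w s a ≤ 1 := by
    intro s a
    have h0 := hmle s a
    have h1 := hMge s a
    have hmm := hmM s (g a)
    constructor
    · exact div_nonneg (by linarith) (by linarith)
    · rcases eq_or_lt_of_le (show (0:ℝ) ≤ Mx s (g a) - mn s (g a) by linarith) with he | hlt
      · simp only [hR2w, ← he, div_zero]; norm_num
      · exact (div_le_one hlt).2 (by linarith)
  have heqw : ∀ s a, R s a = (1 - bRw s a) * R1w s (g a) + bRw s a * R2w s a := by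
    intro s a
    have h0 := hmle s a
    have h1 := hMge s a
    have hm0' := hm0 s (g a)
    have hM1' := hM1 s (g a)
    simp only [hbRw, hR1w, hR2w]
    by_cases hdz : Mx s (g a) - mn s (g a) = 0
    · rw [hdz]
      norm_num
      linarith
    · have hdiv : (Mx s (g a) - mn s (g a)) * ((R s a - mn s (g a)) / (Mx s (g a) - mn s (g a)))
          = R s a - mn s (g a) := by
        field_simp
      by_cases h1d : (1:ℝ) - (Mx s (g a) - mn s (g a)) = 0
      · have hmz : mn s (g a) = 0 := le_antisymm (by linarith) hm0'
        rw [h1d, zero_mul, zero_add]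
        linarith [hdiv, hmz]
      · have hfirst : (1 - (Mx s (g a) - mn s (g a)))
            * (mn s (g a) / (1 - (Mx s (g a) - mn s (g a)))) = mn s (g a) := by
          field_simp
        linarith [hdiv, hfirst]
  have hsup : (⨆ p : S × A, bRw p.1 p.2) = ⨆ p : S × G, (Mx p.1 p.2 - mn p.1 p.2) := by
    apply le_antisymm
    · exact ciSup_le fun p => le_ciSup (bdda fun q : S × G => Mx q.1 q.2 - mn q.1 q.2) (p.1, g p.2)
    · apply ciSup_le
      rintro ⟨s, h⟩
      obtain ⟨a, rfl⟩ := hg h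
      exact le_ciSup (bdda fun q : S × A => bRw q.1 q.2) (s, a)
  constructor
  · exact ⟨bRw, R1w, R2w, hbRw01, hR1w01, hR2w01, heqw, hsup.symm⟩
  · rintro x ⟨bR, R1, R2, hb, h1, h2, heq, rfl⟩
    apply ciSup_le
    rintro ⟨s, h⟩
    rw [sub_le_iff_le_add]
    apply ciSup_le
    rintro ⟨a, ha⟩
    rw [← sub_le_iff_le_add']
    apply le_ciInf
    rintro ⟨a', ha'⟩
    have hba : bR s a ≤ ⨆ p : S × A, bR p.1 p.2 :=
      le_ciSup (bdda fun q : S × A => bR q.1 q.2) (s, a)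
    have hba' : bR s a' ≤ ⨆ p : S × A, bR p.1 p.2 :=
      le_ciSup (bdda fun q : S × A => bR q.1 q.2) (s, a')
    have e1 := heq s a
    have e2 := heq s a'
    rw [ha] at e1
    rw [ha'] at e2
    have f1 := hb s a
    have f2 := hb s a'
    have f3 := h1 s h
    have f4 := h2 s a
    have f5 := h2 s a'
    nlinarith [mul_nonneg f1.1 (sub_nonneg.2 f4.2),
      mul_nonneg f1.1 f5.1,
      mul_nonneg (sub_nonneg.2 (le_trans f1.2 (le_refl _))) f3.1,
      mul_nonneg (sub_nonneg.2 hba) (sub_nonneg.2 f3.2),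
      mul_nonneg (sub_nonneg.2 hba') f3.1,
      mul_nonneg f2.1 f5.1]


end MDPGroup
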